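/- Let $n \ge 0$ and let $T$ be a stable (at-least-trivalent) tree whose leaves are bijectively labeled by $\{a, b, c, 1, \ldots, n\}$. Let $\chi$ be a coloring of the labels by $\{R, G\}$ with $\chi(a) = R$, and assume at least one label is colored $G$. If $\chi$ has the strong separation property (no $R$-type and no $G$-type bad configuration), then there exists a unique edge $e$ of $T$ such that, after deleting $e$, all leaves with $R$-colored labels lie in one connected component of $T - e$ and all leaves with $G$-colored labels lie in the other connected component. -/

import Mathlib

/-- `w` lies on the (unique, since we work in trees) path from `u` to `v` in `G`. -/
def OnPath {V : Type*} (G : SimpleGraph V) (u v w : V) : Prop :=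
  ∃ p : G.Walk u v, p.IsPath ∧ w ∈ p.support

/-- The degree of a vertex, as the cardinality of its neighbor set. -/
noncomputable def Ndeg {V : Type*} (G : SimpleGraph V) (v : V) : ℕ :=
  (G.neighborSet v).ncard

/-- A stable (at-least-trivalent) tree: a tree with no vertex of degree 2
and at least one vertex of degree ≥ 3. -/
def IsStableTree {V : Type*} (G : SimpleGraph V) : Prop :=
  G.IsTree ∧ (∀ v, Ndeg G v ≠ 2) ∧ (∃ v, 3 ≤ Ndeg G v)

/-- `lf` is a bijective labeling of the leaves of `G` by the label set
`{a, b, c, 1, …, m}`, encoded as `{0, 1, …, m+2}` via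
`a ↔ 0`, `b ↔ 1`, `c ↔ 2`, numeric label `ℓ ↔ ℓ+2`. -/
def IsLeafLabeling {V : Type*} (G : SimpleGraph V) (m : ℕ) (lf : ℕ → V) : Prop :=
  (∀ s t, s < m + 3 → t < m + 3 → lf s = lf t → s = t) ∧
  (∀ v, Ndeg G v = 1 ↔ ∃ s, s < m + 3 ∧ lf s = v)

/-- The vertex set of the minimal subtree `S_i` of `G` spanning the leaves
labeled by `{a, b, c, 1, …, i}` (label indices `< i+3`): the union of all
paths between these leaves. -/
def SpanSet {V : Type*} (G : SimpleGraph V) (lf : ℕ → V) (i : ℕ) : Set V :=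
  {v | ∃ j k, j < i + 3 ∧ k < i + 3 ∧ OnPath G (lf j) (lf k) v}

/-- Degree of `v` within the subtree with vertex set `s`: the number of
neighbors of `v` lying in `s`. -/
noncomputable def DegIn {V : Type*} (G : SimpleGraph V) (s : Set V) (v : V) : ℕ :=
  (G.neighborSet v ∩ s).ncard

/-- `w` is the vertex `v_i`: the vertex of degree ≥ 3 in `S_i` nearest to the
leaf labeled by the numeric label `i` (label index `i+2`): every vertex
strictly between that leaf and `w` on the path has degree ≤ 2 in `S_i`. -/
def IsBranchVertexAt {V : Type*} (G : SimpleGraph V) (lf : ℕ → V) (i : ℕ) (w : V) : Prop :=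
  w ∈ SpanSet G lf i ∧ 3 ≤ DegIn G (SpanSet G lf i) w ∧
  ∀ u, OnPath G (lf (i + 2)) w u → u ≠ lf (i + 2) → u ≠ w →
    DegIn G (SpanSet G lf i) u ≤ 2

/-- "`i` separates `j` and `k` at level `i`": the vertex `v_i` lies on the
path between the leaves with label indices `j` and `k`. -/
def SeparatesAt {V : Type*} (G : SimpleGraph V) (lf : ℕ → V) (i j k : ℕ) : Prop :=
  ∃ w, IsBranchVertexAt G lf i w ∧ OnPath G (lf j) (lf k) w

/-- An `R`-type bad configuration for the green/red coloring `χ`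
(`χ s` means label index `s` is colored `G`reen): indices `i ∈ {1,…,m}` and
distinct `j, k ∈ L_i` (label indices in `[1, i+1]`) with `j, k` green, the
numeric label `i` (label index `i+2`) red, and `i` separating `j`, `k`. -/
def RBad {V : Type*} (G : SimpleGraph V) (lf : ℕ → V) (m : ℕ) (χ : ℕ → Prop) : Prop :=
  ∃ i j k, 1 ≤ i ∧ i ≤ m ∧ 1 ≤ j ∧ j ≤ i + 1 ∧ 1 ≤ k ∧ k ≤ i + 1 ∧ j ≠ k ∧
    χ j ∧ χ k ∧ ¬ χ (i + 2) ∧ SeparatesAt G lf i j k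

/-- A `G`-type bad configuration: `i` and `k` green, `j` red, and `i`
separating `a` (label index `0`) and `j`. -/
def GBad {V : Type*} (G : SimpleGraph V) (lf : ℕ → V) (m : ℕ) (χ : ℕ → Prop) : Prop :=
  ∃ i j k, 1 ≤ i ∧ i ≤ m ∧ 1 ≤ j ∧ j ≤ i + 1 ∧ 1 ≤ k ∧ k ≤ i + 1 ∧ j ≠ k ∧
    χ (i + 2) ∧ χ k ∧ ¬ χ j ∧ SeparatesAt G lf i 0 j

/-- The strong separation property: no bad configuration of either type. -/
def StrongSep {V : Type*} (G : SimpleGraph V) (lf : ℕ → V) (m : ℕ) (χ : ℕ → Prop) : Prop :=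
  ¬ RBad G lf m χ ∧ ¬ GBad G lf m χ


set_option linter.unusedSectionVars false
set_option linter.dupNamespace false
set_option linter.unusedVariables false

open SimpleGraph Walk

namespace SSep

variable {V : Type*} [DecidableEq V] {G : SimpleGraph V}

noncomputable def tp (hT : G.IsTree) (u v : V) : G.Walk u v :=
  (hT.existsUnique_path u v).exists.choose

lemma tp_isPath (hT : G.IsTree) (u v : V) : (tp hT u v).IsPath :=
  (hT.existsUnique_path u v).exists.choose_spec

lemma eq_tp (hT : G.IsTree) {u v : V} (p : G.Walk u v) (hp : p.IsPath) : p = tp hT u v :=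
  (hT.existsUnique_path u v).unique hp (tp_isPath hT u v)

lemma tp_self (hT : G.IsTree) (u : V) : tp hT u u = Walk.nil :=
  (eq_tp hT Walk.nil (IsPath.nil)).symm

lemma support_tp_self (hT : G.IsTree) (u : V) : (tp hT u u).support = [u] := by
  rw [tp_self]; rfl

lemma tp_symm (hT : G.IsTree) (u v : V) : tp hT v u = (tp hT u v).reverse :=
  (eq_tp hT _ ((tp_isPath hT u v).reverse)).symm

lemma mem_symm (hT : G.IsTree) {u v w : V} (h : w ∈ (tp hT u v).support) :
    w ∈ (tp hT v u).support := by
  rw [tp_symm, Walk.support_reverse, List.mem_reverse]; exact h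

lemma edges_symm (hT : G.IsTree) {u v : V} {e : Sym2 V} (h : e ∈ (tp hT u v).edges) :
    e ∈ (tp hT v u).edges := by
  rw [tp_symm, Walk.edges_reverse, List.mem_reverse]; exact h

lemma support_tp_subset (hT : G.IsTree) {u v : V} (W : G.Walk u v) :
    (tp hT u v).support ⊆ W.support := by
  rw [← eq_tp hT W.bypass W.bypass_isPath]; exact W.support_bypass_subset

lemma edges_tp_subset (hT : G.IsTree) {u v : V} (W : G.Walk u v) :
    (tp hT u v).edges ⊆ W.edges := by
  rw [← eq_tp hT W.bypass W.bypass_isPath]; exact W.edges_bypass_subset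

lemma tp_split (hT : G.IsTree) {u v w : V} (h : w ∈ (tp hT u v).support) :
    tp hT u v = (tp hT u w).append (tp hT w v) := by
  conv_lhs => rw [← take_spec (tp hT u v) h]
  rw [← eq_tp hT _ ((tp_isPath hT u v).takeUntil h),
    ← eq_tp hT _ ((tp_isPath hT u v).dropUntil h)]

lemma mem_split (hT : G.IsTree) {u v w z : V} (h : w ∈ (tp hT u v).support)
    (hz : z ∈ (tp hT u v).support) :
    z ∈ (tp hT u w).support ∨ z ∈ (tp hT w v).support := by
  rw [tp_split hT h, Walk.mem_support_append_iff] at hz; exact hz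

lemma supp_left_sub (hT : G.IsTree) {u v w : V} (h : w ∈ (tp hT u v).support) :
    (tp hT u w).support ⊆ (tp hT u v).support := by
  rw [tp_split hT h]; exact fun x hx => Walk.subset_support_append_left _ _ hx

lemma supp_right_sub (hT : G.IsTree) {u v w : V} (h : w ∈ (tp hT u v).support) :
    (tp hT w v).support ⊆ (tp hT u v).support := by
  rw [tp_split hT h]; exact fun x hx => Walk.subset_support_append_right _ _ hx

lemma edges_left_sub (hT : G.IsTree) {u v w : V} (h : w ∈ (tp hT u v).support) :
    (tp hT u w).edges ⊆ (tp hT u v).edges := by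
  rw [tp_split hT h, Walk.edges_append]; exact List.subset_append_left _ _

lemma tp_inter (hT : G.IsTree) {u v w z : V} (h : w ∈ (tp hT u v).support)
    (h1 : z ∈ (tp hT u w).support) (h2 : z ∈ (tp hT w v).support) : z = w := by
  by_contra hzw
  have hp := tp_isPath hT u v
  rw [tp_split hT h] at hp
  rw [Walk.isPath_def, Walk.support_append, List.nodup_append] at hp
  refine hp.2.2 z h1 z ?_ rfl
  have hc := Walk.support_eq_cons (tp hT w v)
  rw [hc] at h2
  rcases List.mem_cons.mp h2 with h2' | h2'
  · exact absurd h2' hzw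
  · exact h2'

lemma mutual_eq (hT : G.IsTree) {a v q : V} (h1 : q ∈ (tp hT a v).support)
    (h2 : v ∈ (tp hT a q).support) : q = v :=
  tp_inter hT h2 h1 (Walk.end_mem_support _)

/-- M' : anything on the path x‑y is on the path z‑x or the path z‑y. -/
lemma mem_or (hT : G.IsTree) {x y w : V} (h : w ∈ (tp hT x y).support) (z : V) :
    w ∈ (tp hT z x).support ∨ w ∈ (tp hT z y).support := by
  by_contra hc
  push_neg at hc
  have h1 : w ∉ (tp hT x z).support := fun hh => hc.1 (mem_symm hT hh)
  have := support_tp_subset hT ((tp hT x z).append (tp hT z y)) h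
  rw [Walk.mem_support_append_iff] at this
  rcases this with h' | h'
  · exact h1 h'
  · exact hc.2 h'

/-- M : if w is on the path u‑v and u is on the path x‑y, then w is on x‑v or y‑v. -/
lemma mem_M (hT : G.IsTree) {u v x y w : V} (h : w ∈ (tp hT u v).support)
    (hu : u ∈ (tp hT x y).support) :
    w ∈ (tp hT x v).support ∨ w ∈ (tp hT y v).support := by
  rcases mem_or hT h x with h' | h'
  · -- w ∈ tp x u
    have hxy : w ∈ (tp hT x y).support := supp_left_sub hT hu h'
    rcases mem_or hT hxy v with h'' | h''
    · exact Or.inl (mem_symm hT h'')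
    · exact Or.inr (mem_symm hT h'')
  · exact Or.inl h'

lemma exists_snd (hT : G.IsTree) {u v : V} (hne : u ≠ v) :
    ∃ (z : V) (h : G.Adj u z), tp hT u v = Walk.cons h (tp hT z v) := by
  obtain ⟨z, h, q, hq⟩ := Walk.exists_eq_cons_of_ne hne (tp hT u v)
  have hp : q.IsPath := by
    have := tp_isPath hT u v
    rw [hq] at this
    exact this.of_cons
  exact ⟨z, h, by rw [hq, eq_tp hT q hp]⟩

lemma snd_mem (hT : G.IsTree) {u v z : V} {h : G.Adj u z}
    (hq : tp hT u v = Walk.cons h (tp hT z v)) : z ∈ (tp hT u v).support := by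
  rw [hq, Walk.support_cons]
  exact List.mem_cons_of_mem _ (Walk.start_mem_support _)

/-- unique path between adjacent vertices is the edge -/
lemma tp_adj (hT : G.IsTree) {u v : V} (h : G.Adj u v) :
    tp hT u v = Walk.cons h Walk.nil := by
  refine (eq_tp hT _ ?_).symm
  rw [Walk.cons_isPath_iff]
  exact ⟨IsPath.nil, by simp [h.ne]⟩

/-- a neighbor of `u` lying on the path `u‑v` is the second vertex -/
lemma cons_of_adj_mem (hT : G.IsTree) {u v z : V} (h : G.Adj u z)
    (hm : z ∈ (tp hT u v).support) : tp hT u v = Walk.cons h (tp hT z v) := by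
  rw [tp_split hT hm, tp_adj hT h]
  rfl

lemma adj_mem_unique (hT : G.IsTree) {u v z z' : V} (h : G.Adj u z) (h' : G.Adj u z')
    (hm : z ∈ (tp hT u v).support) (hm' : z' ∈ (tp hT u v).support) : z = z' := by
  have e1 := cons_of_adj_mem hT h hm
  have e2 := cons_of_adj_mem hT h' hm'
  have : (Walk.cons h (tp hT z v)).support = (Walk.cons h' (tp hT z' v)).support := by
    rw [← e1, ← e2]
  rw [Walk.support_cons, Walk.support_cons, Walk.support_eq_cons (tp hT z v),
    Walk.support_eq_cons (tp hT z' v)] at this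
  exact (List.cons.inj (List.cons.inj this).2).1

/-- interior vertices of a path have two distinct neighbours on it -/
lemma interior_nbrs (hT : G.IsTree) {u v w : V} (h : w ∈ (tp hT u v).support)
    (hu : w ≠ u) (hv : w ≠ v) :
    ∃ d1 d2, d1 ≠ d2 ∧ G.Adj w d1 ∧ G.Adj w d2 ∧
      d1 ∈ (tp hT u w).support ∧ d2 ∈ (tp hT w v).support := by
  obtain ⟨d1, h1, e1⟩ := exists_snd hT (hu : w ≠ u)
  obtain ⟨d2, h2, e2⟩ := exists_snd hT (hv : w ≠ v)
  have m1 : d1 ∈ (tp hT u w).support := mem_symm hT (snd_mem hT e1)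
  have m2 : d2 ∈ (tp hT w v).support := snd_mem hT e2
  refine ⟨d1, d2, ?_, h1, h2, m1, m2⟩
  intro hd
  subst hd
  have := tp_inter hT h m1 m2
  exact h1.ne' this




lemma cons_eq_tp (hT : G.IsTree) {u z v : V} (h : G.Adj u z)
    (hns : u ∉ (tp hT z v).support) : tp hT u v = Walk.cons h (tp hT z v) := by
  refine (eq_tp hT _ ?_).symm
  rw [Walk.cons_isPath_iff]
  exact ⟨tp_isPath hT z v, hns⟩

lemma exists_first_aux {S : Set V} : ∀ {u v : V} (p : G.Walk u v), p.IsPath → v ∈ S →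
    ∃ (w : V) (p1 : G.Walk u w), w ∈ S ∧ w ∈ p.support ∧ p1.IsPath ∧
      p1.support ⊆ p.support ∧ ∀ z ∈ p1.support, z ≠ w → z ∉ S := by
  intro u v p
  induction p with
  | nil =>
    intro _ hv
    exact ⟨_, Walk.nil, hv, by simp, IsPath.nil, by simp, by simp⟩
  | @cons a b c h q ih =>
    intro hp hv
    by_cases ha : a ∈ S
    · exact ⟨a, Walk.nil, ha, by simp, IsPath.nil, by simp, by simp⟩
    · obtain ⟨w, p1, hwS, hwmem, hp1, hsub, hpre⟩ := ih hp.of_cons hv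
      have hna : a ∉ p1.support := fun hh => ((Walk.cons_isPath_iff _ _).mp hp).2 (hsub hh)
      refine ⟨w, Walk.cons h p1, hwS, by simp [hwmem], ?_, ?_, ?_⟩
      · rw [Walk.cons_isPath_iff]; exact ⟨hp1, hna⟩
      · intro z hz
        rw [Walk.support_cons] at hz
        rcases List.mem_cons.mp hz with rfl | hz
        · simp
        · simp [hsub hz]
      · intro z hz hzw
        rw [Walk.support_cons] at hz
        rcases List.mem_cons.mp hz with rfl | hz
        · exact ha
        · exact hpre z hz hzw

lemma exists_first (hT : G.IsTree) (u : V) {v : V} {S : Set V} (hv : v ∈ S) :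
    ∃ w, w ∈ S ∧ w ∈ (tp hT u v).support ∧
      ∀ z ∈ (tp hT u w).support, z ≠ w → z ∉ S := by
  obtain ⟨w, p1, hwS, hwmem, hp1, _, hpre⟩ :=
    exists_first_aux (tp hT u v) (tp_isPath hT u v) hv
  rw [eq_tp hT p1 hp1] at hpre
  exact ⟨w, hwS, hwmem, hpre⟩

lemma reachable_delete_iff (hT : G.IsTree) (e : Sym2 V) (u v : V) :
    (G.deleteEdges {e}).Reachable u v ↔ e ∉ (tp hT u v).edges := by
  constructor
  · rintro ⟨W⟩ he
    have hsub : ∀ e' ∈ W.edges, e' ∈ G.edgeSet := by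
      intro e' h'
      have := W.edges_subset_edgeSet h'
      rw [G.edgeSet_deleteEdges] at this
      exact this.1
    have hmem : e ∈ W.edges := by
      have h2 := edges_tp_subset hT (W.transfer G hsub) he
      rwa [Walk.edges_transfer] at h2
    have := W.edges_subset_edgeSet hmem
    rw [G.edgeSet_deleteEdges] at this
    exact this.2 rfl
  · intro he
    exact ⟨(tp hT u v).toDeleteEdges {e} (by
      intro e' h' hin
      rw [Set.mem_singleton_iff] at hin
      exact he (hin ▸ h'))⟩

lemma ne_of_not_reach (hT : G.IsTree) {e : Sym2 V} {u v : V}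
    (h : ¬ (G.deleteEdges {e}).Reachable u v) : u ≠ v := by
  rintro rfl; exact h (Reachable.refl _)


section Labeled

variable [Fintype V] {n : ℕ} {lf : ℕ → V} {χ : ℕ → Prop}

lemma onPath_iff (hT : G.IsTree) {u v w : V} :
    OnPath G u v w ↔ w ∈ (tp hT u v).support :=
  ⟨fun ⟨p, hp, hm⟩ => (eq_tp hT p hp) ▸ hm, fun h => ⟨tp hT u v, tp_isPath hT u v, h⟩⟩

/-- the span as a set of path supports -/
def spS (hT : G.IsTree) (lf : ℕ → V) (m : ℕ) : Set V :=
  {v | ∃ j k, j < m + 3 ∧ k < m + 3 ∧ v ∈ (tp hT (lf j) (lf k)).support}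

lemma spanSet_eq (hT : G.IsTree) (m : ℕ) : SpanSet G lf m = spS hT lf m := by
  ext w
  constructor
  · rintro ⟨j, k, hj, hk, hp⟩; exact ⟨j, k, hj, hk, (onPath_iff hT).1 hp⟩
  · rintro ⟨j, k, hj, hk, hp⟩; exact ⟨j, k, hj, hk, (onPath_iff hT).2 hp⟩

lemma spS_mono (hT : G.IsTree) {m m' : ℕ} (h : m ≤ m') : spS hT lf m ⊆ spS hT lf m' := by
  rintro w ⟨j, k, hj, hk, hp⟩; exact ⟨j, k, by omega, by omega, hp⟩

lemma lf_mem_spS (hT : G.IsTree) {m j : ℕ} (hj : j < m + 3) : lf j ∈ spS hT lf m :=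
  ⟨j, j, hj, hj, Walk.start_mem_support _⟩

lemma spS_closed (hT : G.IsTree) {m : ℕ} {a b : V} (ha : a ∈ spS hT lf m)
    (hb : b ∈ spS hT lf m) : ∀ w ∈ (tp hT a b).support, w ∈ spS hT lf m := by
  obtain ⟨j, k, hj, hk, hpa⟩ := ha
  obtain ⟨j', k', hj', hk', hpb⟩ := hb
  intro w hw
  rcases mem_M hT hw hpa with h | h
  · rcases mem_M hT (mem_symm hT h) hpb with h' | h'
    · exact ⟨j', j, hj', hj, h'⟩
    · exact ⟨k', j, hk', hj, h'⟩
  · rcases mem_M hT (mem_symm hT h) hpb with h' | h'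
    · exact ⟨j', k, hj', hk, h'⟩
    · exact ⟨k', k, hk', hk, h'⟩

lemma ndeg_ge_two {v x y : V} (hx : G.Adj v x) (hy : G.Adj v y) (hxy : x ≠ y) :
    2 ≤ Ndeg G v := by
  have : 1 < (G.neighborSet v).ncard :=
    (Set.one_lt_ncard_iff (Set.toFinite _)).2 ⟨x, y, hx, hy, hxy⟩
  exact this

lemma leaf_mem (hT : G.IsTree) (hlf : IsLeafLabeling G n lf) {s j k : ℕ}
    (hs : s < n + 3) (hj : j < n + 3) (hk : k < n + 3)
    (h : lf s ∈ (tp hT (lf j) (lf k)).support) : s = j ∨ s = k := by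
  by_contra hc
  push_neg at hc
  have hsj : lf s ≠ lf j := fun hh => hc.1 (hlf.1 s j hs hj hh)
  have hsk : lf s ≠ lf k := fun hh => hc.2 (hlf.1 s k hs hk hh)
  obtain ⟨d1, d2, hd12, hda1, hda2, _, _⟩ := interior_nbrs hT h hsj hsk
  have h2 := ndeg_ge_two hda1 hda2 hd12
  have h1 : Ndeg G (lf s) = 1 := (hlf.2 _).2 ⟨s, hs, rfl⟩
  omega

lemma lf_not_mem_spS (hT : G.IsTree) (hlf : IsLeafLabeling G n lf) {m : ℕ} (hmn : m < n) :
    lf (m + 3) ∉ spS hT lf m := by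
  rintro ⟨j, k, hj, hk, hmem⟩
  rcases leaf_mem hT hlf (by omega) (by omega) (by omega) hmem with h | h <;> omega

lemma gate (hT : G.IsTree) (hlf : IsLeafLabeling G n lf) {m : ℕ} (hmn : m < n) :
    ∃ q, q ∈ spS hT lf m ∧ q ∈ (tp hT (lf (m + 3)) (lf 0)).support ∧
      (∀ z ∈ (tp hT (lf (m + 3)) q).support, z ≠ q → z ∉ spS hT lf m) ∧
      (∀ j, j < m + 3 → q ≠ lf j) ∧
      (∀ z ∈ spS hT lf m, q ∈ (tp hT (lf (m + 3)) z).support) ∧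
      IsBranchVertexAt G lf (m + 1) q := by
  set L := lf (m + 3) with hL
  obtain ⟨q, hqS, hqP0, hpre⟩ := exists_first hT L (lf_mem_spS hT (show (0:ℕ) < m + 3 by omega))
  have hLS : L ∉ spS hT lf m := lf_not_mem_spS hT hlf hmn
  have hqL : q ≠ L := fun h => hLS (h ▸ hqS)
  obtain ⟨x1, hx1adj, hx1e⟩ := exists_snd hT hqL
  have hx1mem : x1 ∈ (tp hT q L).support := snd_mem hT hx1e
  have hx1memP : x1 ∈ (tp hT L q).support := mem_symm hT hx1mem
  have hx1q : x1 ≠ q := (hx1adj.ne).symm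
  have hx1S : x1 ∉ spS hT lf m := hpre x1 hx1memP hx1q
  -- q is not a labelled leaf of level ≤ m
  have hqlf : ∀ j, j < m + 3 → q ≠ lf j := by
    intro j hj hqeq
    have hdeg : Ndeg G (lf j) = 1 := (hlf.2 _).2 ⟨j, by omega, rfl⟩
    have hk' : ∃ k', k' < m + 3 ∧ k' ≠ j := by
      rcases Nat.eq_zero_or_pos j with h0 | h0
      · exact ⟨1, by omega, by omega⟩
      · exact ⟨0, by omega, by omega⟩
    obtain ⟨k', hk'1, hk'2⟩ := hk'
    have hne2 : q ≠ lf k' := by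
      rw [hqeq]; intro hh; exact hk'2 ((hlf.1 k' j (by omega) (by omega) hh.symm))
    obtain ⟨y1, hy1adj, hy1e⟩ := exists_snd hT hne2
    have hy1mem : y1 ∈ (tp hT q (lf k')).support := snd_mem hT hy1e
    have hy1S : y1 ∈ spS hT lf m := by
      refine ⟨j, k', hj, hk'1, ?_⟩
      rw [← hqeq]; exact hy1mem
    have hy1x1 : x1 ≠ y1 := fun hh => hx1S (hh ▸ hy1S)
    have h2 := ndeg_ge_two (hqeq ▸ hx1adj) (hqeq ▸ hy1adj) hy1x1
    omega
  -- gate property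
  have hgate : ∀ z ∈ spS hT lf m, q ∈ (tp hT L z).support := by
    intro z hzS
    by_contra hqz
    have hx1' := support_tp_subset hT ((tp hT L z).append (tp hT z q)) hx1memP
    rw [Walk.mem_support_append_iff] at hx1'
    have hx1Lz : x1 ∈ (tp hT L z).support := by
      rcases hx1' with h | h
      · exact h
      · exact absurd (spS_closed hT hzS hqS _ h) hx1S
    have hqx1z : q ∉ (tp hT x1 z).support := fun hh => hqz (supp_right_sub hT hx1Lz hh)
    have hcons := cons_eq_tp hT hx1adj hqx1z
    have hx1qz : x1 ∈ (tp hT q z).support := snd_mem hT hcons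
    exact hx1S (spS_closed hT hqS hzS _ hx1qz)
  -- interior neighbours of q inside the old span
  obtain ⟨j0, k0, hj0, hk0, hqm⟩ := hqS
  have hq1 : q ≠ lf j0 := hqlf j0 hj0
  have hq2 : q ≠ lf k0 := hqlf k0 hk0
  obtain ⟨d1, d2, hd12, hda1, hda2, hdm1, hdm2⟩ := interior_nbrs hT hqm hq1 hq2
  have hd1S : d1 ∈ spS hT lf m := ⟨j0, k0, hj0, hk0, supp_left_sub hT hqm hdm1⟩
  have hd2S : d2 ∈ spS hT lf m := ⟨j0, k0, hj0, hk0, supp_right_sub hT hqm hdm2⟩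
  have hqS' : q ∈ spS hT lf m := ⟨j0, k0, hj0, hk0, hqm⟩
  -- description of the next span
  have hdesc : ∀ v' ∈ spS hT lf (m + 1), v' ∈ spS hT lf m ∨ v' ∈ (tp hT L (lf 0)).support := by
    have key : ∀ k', k' < m + 3 → ∀ v', v' ∈ (tp hT L (lf k')).support →
        v' ∈ spS hT lf m ∨ v' ∈ (tp hT L (lf 0)).support := by
      intro k' hk' v' hv'
      have hq' := hgate (lf k') (lf_mem_spS hT hk')
      rcases mem_split hT hq' hv' with h | h
      · exact Or.inr (supp_left_sub hT hqP0 h)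
      · exact Or.inl (spS_closed hT hqS' (lf_mem_spS hT hk') _ h)
    rintro v' ⟨j, k, hj, hk, hm'⟩
    rcases Nat.lt_or_ge j (m + 3) with hjs | hjl
    · rcases Nat.lt_or_ge k (m + 3) with hks | hkl
      · exact Or.inl ⟨j, k, hjs, hks, hm'⟩
      · have hkm : k = m + 3 := by omega
        subst hkm
        exact key j hjs v' (mem_symm hT hm')
    · have hjm : j = m + 3 := by omega
      subst hjm
      rcases Nat.lt_or_ge k (m + 3) with hks | hkl
      · exact key k hks v' hm'
      · have hkm : k = m + 3 := by omega
        subst hkm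
        rw [support_tp_self hT] at hm'
        rcases List.mem_singleton.mp hm' with rfl
        exact Or.inr (Walk.start_mem_support _)
  have hLeq : lf (m + 1 + 2) = L := by norm_num [hL]
  refine ⟨q, hqS', hqP0, hpre, hqlf, hgate, ?_, ?_, ?_⟩
  · rw [spanSet_eq hT]
    exact ⟨m + 3, 0, by omega, by omega, hqP0⟩
  · -- degree at least 3
    have hx1' : x1 ∈ SpanSet G lf (m + 1) := by
      rw [spanSet_eq hT]
      exact ⟨m + 3, 0, by omega, by omega, supp_left_sub hT hqP0 hx1memP⟩
    have hd1' : d1 ∈ SpanSet G lf (m + 1) := by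
      rw [spanSet_eq hT]; exact spS_mono hT (by omega) hd1S
    have hd2' : d2 ∈ SpanSet G lf (m + 1) := by
      rw [spanSet_eq hT]; exact spS_mono hT (by omega) hd2S
    have : 2 < (G.neighborSet q ∩ SpanSet G lf (m + 1)).ncard := by
      refine (Set.two_lt_ncard_iff (Set.toFinite _)).2
        ⟨x1, d1, d2, ⟨hx1adj, hx1'⟩, ⟨hda1, hd1'⟩, ⟨hda2, hd2'⟩, ?_, ?_, hd12⟩
      · exact fun hh => hx1S (hh ▸ hd1S)
      · exact fun hh => hx1S (hh ▸ hd2S)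
    exact this
  · -- interior vertices have degree at most 2
    intro u hOn hne1 hne2
    rw [hLeq] at hOn hne1
    have hu : u ∈ (tp hT L q).support := (onPath_iff hT).1 hOn
    have huS : u ∉ spS hT lf m := hpre u hu hne2
    have huP0 : u ∈ (tp hT L (lf 0)).support := supp_left_sub hT hqP0 hu
    have hu0 : u ≠ lf 0 := fun h => huS (h ▸ lf_mem_spS hT (show (0:ℕ) < m + 3 by omega))
    obtain ⟨D1, D2, hD12, hDa1, hDa2, hDm1, hDm2⟩ := interior_nbrs hT huP0 hne1 hu0
    have hqu0 : q ∈ (tp hT u (lf 0)).support := by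
      rcases mem_split hT huP0 hqP0 with h | h
      · exact absurd (mutual_eq hT h hu).symm hne2
      · exact h
    have hsub2 : G.neighborSet u ∩ SpanSet G lf (m + 1) ⊆ {D1, D2} := by
      rintro z ⟨hza, hzS'⟩
      have hza' : G.Adj u z := hza
      rw [spanSet_eq hT] at hzS'
      rcases hdesc z hzS' with hz | hz
      · by_cases hzq : z = q
        · subst hzq
          have : z = D2 := adj_mem_unique hT hza' hDa2 hqu0 hDm2
          exact Or.inr (by rw [this]; rfl)
        · have hq2' : q ∈ (tp hT L z).support := hgate z hz
          by_cases huz : u ∈ (tp hT L z).support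
          · rcases mem_split hT huz hq2' with h | h
            · exact absurd (mutual_eq hT h hu).symm hne2
            · rw [tp_adj hT hza'] at h
              have h' : q = u ∨ q = z := by simpa using h
              rcases h' with h' | h'
              · exact absurd h'.symm hne2
              · exact absurd h'.symm hzq
          · have hns : u ∉ (tp hT z L).support := fun hh => huz (mem_symm hT hh)
            have hcons := cons_eq_tp hT hza' hns
            have hzmem : z ∈ (tp hT u L).support := snd_mem hT hcons
            have hzLq : z ∈ (tp hT L q).support :=
              supp_left_sub hT hu (mem_symm hT hzmem)
            exact absurd hz (hpre z hzLq hzq)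
      · rcases mem_split hT huP0 hz with h | h
        · have : z = D1 := adj_mem_unique hT hza' hDa1 (mem_symm hT h) (mem_symm hT hDm1)
          exact Or.inl this
        · have : z = D2 := adj_mem_unique hT hza' hDa2 h hDm2
          exact Or.inr (by rw [this]; rfl)
    calc DegIn G (SpanSet G lf (m + 1)) u ≤ ({D1, D2} : Set V).ncard :=
          Set.ncard_le_ncard hsub2 (Set.toFinite _)
      _ ≤ 2 := by
          apply le_trans (Set.ncard_insert_le _ _)
          simp

lemma spans_disjoint (hT : G.IsTree) (hlf : IsLeafLabeling G n lf) (ha : ¬ χ 0)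
    (hsep : StrongSep G lf n χ) :
    ∀ i, i ≤ n → ∀ v,
      (∃ j k, j < i + 3 ∧ k < i + 3 ∧ ¬ χ j ∧ ¬ χ k ∧ v ∈ (tp hT (lf j) (lf k)).support) →
      (∃ j k, j < i + 3 ∧ k < i + 3 ∧ χ j ∧ χ k ∧ v ∈ (tp hT (lf j) (lf k)).support) →
      False := by
  intro i
  induction i with
  | zero =>
    rintro hin v ⟨j, k, hj, hk, hcj, hck, hmr⟩ ⟨j', k', hj', hk', hcj', hck', hmg⟩
    have hjj' : j ≠ j' := fun h => hcj (h ▸ hcj')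
    have hjk' : j ≠ k' := fun h => hcj (h ▸ hck')
    have hkj' : k ≠ j' := fun h => hck (h ▸ hcj')
    have hkk' : k ≠ k' := fun h => hck (h ▸ hck')
    by_cases hjk : j = k
    · subst hjk
      rw [support_tp_self hT] at hmr
      rcases List.mem_singleton.mp hmr with rfl
      rcases leaf_mem hT hlf (by omega) (by omega) (by omega) hmg with h | h
      · exact hjj' h
      · exact hjk' h
    · by_cases hj'k' : j' = k'
      · subst hj'k'
        rw [support_tp_self hT] at hmg
        rcases List.mem_singleton.mp hmg with rfl
        rcases leaf_mem hT hlf (by omega) (by omega) (by omega) hmr with h | h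
        · exact hjj' h.symm
        · exact hkj' h.symm
      · omega
  | succ i ih =>
    rintro hin v ⟨j, k, hj, hk, hcj, hck, hmr⟩ ⟨g1, g2, hg1, hg2, hcg1, hcg2, hmg⟩
    have hi : i ≤ n := by omega
    have hiln : i < n := by omega
    obtain ⟨q, hqS, hqP0, hpre, hqlf, hgate, hbr⟩ := gate hT hlf (lf := lf) hiln
    have e312 : i + 1 + 2 = i + 3 := by omega
    by_cases hχ : χ (i + 3)
    · -- new label is green
      have hjs : j < i + 3 := by
        rcases Nat.lt_or_ge j (i + 3) with h | h
        · exact h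
        · exact absurd (by omega : j = i + 3) (fun hh => hcj (hh ▸ hχ))
      have hks : k < i + 3 := by
        rcases Nat.lt_or_ge k (i + 3) with h | h
        · exact h
        · exact absurd (by omega : k = i + 3) (fun hh => hck (hh ▸ hχ))
      have hvS : v ∈ spS hT lf i := ⟨j, k, hjs, hks, hmr⟩
      have main : ∀ g₀, g₀ < i + 3 → χ g₀ → v ∈ (tp hT (lf (i + 3)) (lf g₀)).support → False := by
        intro g₀ hg0 hcg0 hv
        have hg0pos : g₀ ≠ 0 := fun h0 => ha (h0 ▸ hcg0)
        have hq_ong : q ∈ (tp hT (lf (i + 3)) (lf g₀)).support :=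
          hgate _ (lf_mem_spS hT hg0)
        have hvqg : v ∈ (tp hT q (lf g₀)).support := by
          rcases mem_split hT hq_ong hv with h | h
          · by_cases hvq : v = q
            · subst hvq; exact Walk.start_mem_support _
            · exact absurd hvS (hpre v h hvq)
          · exact h
        by_cases hqR : ∃ r r', r < i + 3 ∧ r' < i + 3 ∧ ¬ χ r ∧ ¬ χ r' ∧
            q ∈ (tp hT (lf r) (lf r')).support
        · obtain ⟨r, r', hr, hr', hcr, hcr', hqrm⟩ := hqR
          have key : ∀ r₀, r₀ < i + 3 → ¬ χ r₀ →
              q ∈ (tp hT (lf 0) (lf r₀)).support → False := by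
            intro r₀ hr0 hcr0 hq0r
            have hr0pos : r₀ ≠ 0 := by
              rintro rfl
              rw [support_tp_self hT] at hq0r
              exact hqlf 0 (by omega) (List.mem_singleton.mp hq0r)
            refine hsep.2 ⟨i + 1, r₀, g₀, by omega, by omega, by omega, by omega,
              by omega, by omega, fun hh => hcr0 (hh ▸ hcg0), by rwa [e312],
              hcg0, hcr0, ⟨q, hbr, (onPath_iff hT).2 hq0r⟩⟩
          rcases mem_or hT hqrm (lf 0) with h | h
          · exact key r hr hcr h
          · exact key r' hr' hcr' h
        · have hvq : v ≠ q := fun hh => hqR ⟨j, k, hjs, hks, hcj, hck, hh ▸ hmr⟩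
          have inner : ∀ a b, a < i + 3 → b < i + 3 → χ a → ¬ χ b →
              q ∈ (tp hT (lf a) (lf b)).support → False := by
            intro a b hA hB hca hcb hqab
            rcases mem_M hT hvqg hqab with h | h
            · exact ih hi v ⟨j, k, hjs, hks, hcj, hck, hmr⟩ ⟨a, g₀, hA, hg0, hca, hcg0, h⟩
            · rcases mem_or hT hqab v with h' | h'
              · rcases mem_or hT hvqg (lf a) with h'' | h''
                · exact hvq (mutual_eq hT h'' (mem_symm hT h'))
                · exact ih hi v ⟨j, k, hjs, hks, hcj, hck, hmr⟩
                    ⟨a, g₀, hA, hg0, hca, hcg0, h''⟩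
              · rcases mem_M hT h' hmr with h'' | h''
                · exact hqR ⟨j, b, hjs, hB, hcj, hcb, h''⟩
                · exact hqR ⟨k, b, hks, hB, hck, hcb, h''⟩
          obtain ⟨j', k', hj', hk', hqm⟩ := hqS
          by_cases hcj' : χ j'
          · by_cases hck' : χ k'
            · -- both green: v on green path + red pair ⇒ ih
              rcases mem_M hT hvqg hqm with h | h
              · exact ih hi v ⟨j, k, hjs, hks, hcj, hck, hmr⟩
                  ⟨j', g₀, hj', hg0, hcj', hcg0, h⟩
              · exact ih hi v ⟨j, k, hjs, hks, hcj, hck, hmr⟩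
                  ⟨k', g₀, hk', hg0, hck', hcg0, h⟩
            · exact inner j' k' hj' hk' hcj' hck' hqm
          · by_cases hck' : χ k'
            · exact inner k' j' hk' hj' hck' hcj' (mem_symm hT hqm)
            · exact hqR ⟨j', k', hj', hk', hcj', hck', hqm⟩
      rcases Nat.lt_or_ge g1 (i + 3) with hg1s | hg1l
      · rcases Nat.lt_or_ge g2 (i + 3) with hg2s | hg2l
        · exact ih hi v ⟨j, k, hjs, hks, hcj, hck, hmr⟩ ⟨g1, g2, hg1s, hg2s, hcg1, hcg2, hmg⟩
        · have : g2 = i + 3 := by omega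
          subst this
          exact main g1 hg1s hcg1 (mem_symm hT hmg)
      · have : g1 = i + 3 := by omega
        subst this
        rcases Nat.lt_or_ge g2 (i + 3) with hg2s | hg2l
        · exact main g2 hg2s hcg2 hmg
        · have : g2 = i + 3 := by omega
          subst this
          rw [support_tp_self hT] at hmg
          rcases List.mem_singleton.mp hmg with rfl
          rcases leaf_mem hT hlf (by omega) (by omega) (by omega) hmr with h | h <;> omega
    · -- new label is red
      have hg1s : g1 < i + 3 := by
        rcases Nat.lt_or_ge g1 (i + 3) with h | h
        · exact h
        · exact absurd hcg1 (by rw [(by omega : g1 = i + 3)]; exact hχ)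
      have hg2s : g2 < i + 3 := by
        rcases Nat.lt_or_ge g2 (i + 3) with h | h
        · exact h
        · exact absurd hcg2 (by rw [(by omega : g2 = i + 3)]; exact hχ)
      have hvS : v ∈ spS hT lf i := ⟨g1, g2, hg1s, hg2s, hmg⟩
      have main : ∀ k₀, k₀ < i + 3 → ¬ χ k₀ →
          v ∈ (tp hT (lf (i + 3)) (lf k₀)).support → False := by
        intro k₀ hk0 hck0 hv
        have hq_onk : q ∈ (tp hT (lf (i + 3)) (lf k₀)).support :=
          hgate _ (lf_mem_spS hT hk0)
        have hvqk : v ∈ (tp hT q (lf k₀)).support := by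
          rcases mem_split hT hq_onk hv with h | h
          · by_cases hvq : v = q
            · subst hvq; exact Walk.start_mem_support _
            · exact absurd hvS (hpre v h hvq)
          · exact h
        by_cases hqG : ∃ g g', g < i + 3 ∧ g' < i + 3 ∧ χ g ∧ χ g' ∧
            q ∈ (tp hT (lf g) (lf g')).support
        · obtain ⟨g, g', hgg, hgg', hcg, hcg', hqgm⟩ := hqG
          have hne : g ≠ g' := by
            rintro rfl
            rw [support_tp_self hT] at hqgm
            exact hqlf g hgg (List.mem_singleton.mp hqgm)
          have hgpos : g ≠ 0 := fun h0 => ha (h0 ▸ hcg)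
          have hg'pos : g' ≠ 0 := fun h0 => ha (h0 ▸ hcg')
          exact hsep.1 ⟨i + 1, g, g', by omega, by omega, by omega, by omega,
            by omega, by omega, hne, hcg, hcg', by rwa [e312],
            ⟨q, hbr, (onPath_iff hT).2 hqgm⟩⟩
        · have hvq : v ≠ q := fun hh => hqG ⟨g1, g2, hg1s, hg2s, hcg1, hcg2, hh ▸ hmg⟩
          have inner : ∀ a b, a < i + 3 → b < i + 3 → ¬ χ a → χ b →
              q ∈ (tp hT (lf a) (lf b)).support → False := by
            intro a b hA hB hca hcb hqab
            rcases mem_M hT hvqk hqab with h | h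
            · exact ih hi v ⟨a, k₀, hA, hk0, hca, hck0, h⟩ ⟨g1, g2, hg1s, hg2s, hcg1, hcg2, hmg⟩
            · rcases mem_or hT hqab v with h' | h'
              · rcases mem_or hT hvqk (lf a) with h'' | h''
                · exact hvq (mutual_eq hT h'' (mem_symm hT h'))
                · exact ih hi v ⟨a, k₀, hA, hk0, hca, hck0, h''⟩
                    ⟨g1, g2, hg1s, hg2s, hcg1, hcg2, hmg⟩
              · rcases mem_M hT h' hmg with h'' | h''
                · exact hqG ⟨g1, b, hg1s, hB, hcg1, hcb, h''⟩
                · exact hqG ⟨g2, b, hg2s, hB, hcg2, hcb, h''⟩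
          obtain ⟨j', k', hj', hk', hqm⟩ := hqS
          by_cases hcj' : χ j'
          · by_cases hck' : χ k'
            · exact hqG ⟨j', k', hj', hk', hcj', hck', hqm⟩
            · exact inner k' j' hk' hj' hck' hcj' (mem_symm hT hqm)
          · by_cases hck' : χ k'
            · exact inner j' k' hj' hk' hcj' hck' hqm
            · rcases mem_M hT hvqk hqm with h | h
              · exact ih hi v ⟨j', k₀, hj', hk0, hcj', hck0, h⟩
                  ⟨g1, g2, hg1s, hg2s, hcg1, hcg2, hmg⟩
              · exact ih hi v ⟨k', k₀, hk', hk0, hck', hck0, h⟩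
                  ⟨g1, g2, hg1s, hg2s, hcg1, hcg2, hmg⟩
      rcases Nat.lt_or_ge j (i + 3) with hjs | hjl
      · rcases Nat.lt_or_ge k (i + 3) with hks | hkl
        · exact ih hi v ⟨j, k, hjs, hks, hcj, hck, hmr⟩ ⟨g1, g2, hg1s, hg2s, hcg1, hcg2, hmg⟩
        · have : k = i + 3 := by omega
          subst this
          exact main j hjs hcj (mem_symm hT hmr)
      · have : j = i + 3 := by omega
        subst this
        rcases Nat.lt_or_ge k (i + 3) with hks | hkl
        · exact main k hks hck hmr
        · have : k = i + 3 := by omega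
          subst this
          rw [support_tp_self hT] at hmr
          rcases List.mem_singleton.mp hmr with rfl
          rcases leaf_mem hT hlf (by omega) (by omega) (by omega) hmg with h | h <;> omega

end Labeled

end SSep

/-- If a two-coloring (with `a` red and at least one green
label) of the leaves of a stable tree has the strong separation property,
then there is a unique edge whose deletion separates the red leaves from the
green leaves. -/
theorem strong_separation_unique_edge {V : Type*} [Fintype V]
    (n : ℕ) (G : SimpleGraph V) (hT : IsStableTree G)
    (lf : ℕ → V) (hlf : IsLeafLabeling G n lf)
    (χ : ℕ → Prop) (ha : ¬ χ 0) (hg : ∃ s, s < n + 3 ∧ χ s)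
    (hsep : StrongSep G lf n χ) :
    ∃! e : Sym2 V, e ∈ G.edgeSet ∧
      ∀ s t, s < n + 3 → t < n + 3 →
        ((G.deleteEdges {e}).Reachable (lf s) (lf t) ↔ (χ s ↔ χ t)) := by
  classical
  open SSep in
  obtain ⟨hTree, hno2, hge3⟩ := hT
  obtain ⟨s0, hs0, hcs0⟩ := hg
  have hs0ne : s0 ≠ 0 := fun h => ha (h ▸ hcs0)
  have hD := spans_disjoint (χ := χ) hTree hlf ha hsep n le_rfl
  have h0R : ∃ j k, j < n + 3 ∧ k < n + 3 ∧ ¬ χ j ∧ ¬ χ k ∧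
      (lf 0) ∈ (tp hTree (lf j) (lf k)).support :=
    ⟨0, 0, by omega, by omega, ha, ha, Walk.start_mem_support _⟩
  have hg0G : ∃ j k, j < n + 3 ∧ k < n + 3 ∧ χ j ∧ χ k ∧
      (lf s0) ∈ (tp hTree (lf j) (lf k)).support :=
    ⟨s0, s0, hs0, hs0, hcs0, hcs0, Walk.start_mem_support _⟩
  -- first green point on the path from a to the chosen green leaf
  obtain ⟨y, hyG, hyP, hypre⟩ := exists_first hTree (lf 0)
    (v := lf s0) (S := {v | ∃ j k, j < n + 3 ∧ k < n + 3 ∧ χ j ∧ χ k ∧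
      v ∈ (tp hTree (lf j) (lf k)).support}) hg0G
  have hy0 : y ≠ lf 0 := by intro h; exact hD y (by rw [h]; exact h0R) hyG
  obtain ⟨x, hxadj, hxe⟩ := exists_snd hTree hy0
  have hxmem : x ∈ (tp hTree y (lf 0)).support := snd_mem hTree hxe
  have hxmemP' : x ∈ (tp hTree (lf 0) y).support := mem_symm hTree hxmem
  have hxy : x ≠ y := (hxadj.ne).symm
  have hxG : x ∉ {v | ∃ j k, j < n + 3 ∧ k < n + 3 ∧ χ j ∧ χ k ∧
      v ∈ (tp hTree (lf j) (lf k)).support} := hypre x hxmemP' hxy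
  have hxP : x ∈ (tp hTree (lf 0) (lf s0)).support := supp_left_sub hTree hyP hxmemP'
  -- x lies in the red span
  have hxR : ∃ j k, j < n + 3 ∧ k < n + 3 ∧ ¬ χ j ∧ ¬ χ k ∧
      x ∈ (tp hTree (lf j) (lf k)).support := by
    by_contra hxRc
    have hx0 : x ≠ lf 0 := fun h => hxRc (by rw [h]; exact h0R)
    have hxg0 : x ≠ lf s0 := fun h => hxG (by rw [h]; exact hg0G)
    have hNd1 : Ndeg G x ≠ 1 := by
      intro h1
      obtain ⟨s, hs, hlfs⟩ := (hlf.2 x).1 h1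
      by_cases hcs : χ s
      · exact hxG ⟨s, s, hs, hs, hcs, hcs, by rw [← hlfs]; exact Walk.start_mem_support _⟩
      · exact hxRc ⟨s, s, hs, hs, hcs, hcs, by rw [← hlfs]; exact Walk.start_mem_support _⟩
    have hNd0 : 1 ≤ Ndeg G x := by
      have : 0 < (G.neighborSet x).ncard :=
        (Set.ncard_pos (Set.toFinite _)).2 ⟨y, hxadj.symm⟩
      exact this
    have hNd3 : 3 ≤ Ndeg G x := by
      have := hno2 x
      omega
    obtain ⟨p1, p2, hp12, hpa1, hpa2, hpm1, hpm2⟩ := interior_nbrs hTree hxP hx0 hxg0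
    have hnsub : ¬ (G.neighborSet x ⊆ {p1, p2}) := by
      intro hsub
      have h1 := Set.ncard_le_ncard hsub (Set.toFinite _)
      have h2 : ({p1, p2} : Set V).ncard ≤ 2 :=
        le_trans (Set.ncard_insert_le _ _) (by simp)
      have : Ndeg G x ≤ 2 := le_trans h1 h2
      omega
    rw [Set.not_subset] at hnsub
    obtain ⟨z, hzmemN, hz12⟩ := hnsub
    have hzadj : G.Adj x z := hzmemN
    have hzp1 : z ≠ p1 := fun h => hz12 (by rw [h]; exact Set.mem_insert _ _)
    have hzp2 : z ≠ p2 := fun h => hz12 (by rw [h]; exact Set.mem_insert_of_mem _ rfl)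
    have hz1 : z ∉ (tp hTree x (lf 0)).support := fun hh =>
      hzp1 (adj_mem_unique hTree hzadj hpa1 hh (mem_symm hTree hpm1))
    have hz2 : z ∉ (tp hTree x (lf s0)).support := by
      intro hh
      have hyy : (lf s0) ∈ (tp hTree x (lf s0)).support := Walk.end_mem_support _
      exact hzp2 (adj_mem_unique hTree hzadj hpa2 hh hpm2)
    -- find a labelled leaf beyond z
    have hleaf : ∃ s, s < n + 3 ∧ z ∈ (tp hTree (lf s) x).support := by
      have hfin : ({u | z ∈ (tp hTree u x).support} : Set V).Finite := Set.toFinite _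
      have hne : ({u | z ∈ (tp hTree u x).support} : Set V).Nonempty :=
        ⟨z, Walk.start_mem_support _⟩
      obtain ⟨u, hu, hmax⟩ := Set.Finite.exists_maximalFor
        (fun u => (tp hTree u x).length) _ hfin hne
      simp only [Set.mem_setOf_eq] at hu
      have hux : u ≠ x := by
        rintro rfl
        rw [support_tp_self hTree] at hu
        exact hzadj.ne (List.mem_singleton.mp hu).symm
      obtain ⟨u', hu'adj, hu'e⟩ := exists_snd hTree hux
      have hall : ∀ w, G.Adj u w → w ∈ (tp hTree u x).support := by
        intro w hw
        by_contra hnm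
        have hcons := cons_eq_tp hTree hw.symm hnm
        have hzw : z ∈ (tp hTree w x).support := by
          rw [hcons, Walk.support_cons]
          exact List.mem_cons_of_mem _ hu
        have hlen : (tp hTree w x).length = (tp hTree u x).length + 1 := by
          rw [hcons]; simp
        have := @hmax w (by simpa only [Set.mem_setOf_eq] using hzw) (by simp only; omega)
        simp only at this
        omega
      have hsub : G.neighborSet u ⊆ {u'} := by
        intro w hw
        have : w = u' := adj_mem_unique hTree hw hu'adj (hall w hw) (snd_mem hTree hu'e)
        simp [this]
      have hdeg1 : Ndeg G u = 1 := by
        have hle : Ndeg G u ≤ 1 :=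
          le_trans (Set.ncard_le_ncard hsub (Set.toFinite _)) (by simp)
        have hpos : 1 ≤ Ndeg G u :=
          (Set.ncard_pos (Set.toFinite _)).2 ⟨u', hu'adj⟩
        omega
      obtain ⟨s, hs, hlfs⟩ := (hlf.2 u).1 hdeg1
      exact ⟨s, hs, by rw [hlfs]; exact hu⟩
    obtain ⟨s, hs, hzs⟩ := hleaf
    have hxz0 : x ∈ (tp hTree z (lf 0)).support :=
      snd_mem hTree (cons_eq_tp hTree hzadj.symm hz1)
    have hxzg : x ∈ (tp hTree z (lf s0)).support :=
      snd_mem hTree (cons_eq_tp hTree hzadj.symm hz2)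
    have hx0s : x ∈ (tp hTree (lf s) (lf 0)).support := by
      rcases mem_or hTree hxz0 (lf s) with h | h
      · exact absurd (mutual_eq hTree h hzs) hzadj.ne
      · exact h
    have hxgs : x ∈ (tp hTree (lf s) (lf s0)).support := by
      rcases mem_or hTree hxzg (lf s) with h | h
      · exact absurd (mutual_eq hTree h hzs) hzadj.ne
      · exact h
    by_cases hcs : χ s
    · exact hxG ⟨s, s0, hs, hs0, hcs, hcs0, hxgs⟩
    · exact hxRc ⟨s, 0, hs, by omega, hcs, ha, hx0s⟩
  -- the separating edge
  have hadjxy : G.Adj x y := hxadj.symm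
  have heE : s(x, y) ∈ G.edgeSet := hadjxy
  have heP : s(x, y) ∈ (tp hTree (lf 0) (lf s0)).edges := by
    have h1 : s(x, y) ∈ (tp hTree y (lf 0)).edges := by
      rw [hxe, Walk.edges_cons, Sym2.eq_swap]
      exact List.mem_cons_self
    exact edges_left_sub hTree hyP (edges_symm hTree h1)
  have hred : ∀ s t, s < n + 3 → t < n + 3 → ¬ χ s → ¬ χ t →
      s(x, y) ∉ (tp hTree (lf s) (lf t)).edges := by
    intro s t hs ht hcs hct he
    have hym : y ∈ (tp hTree (lf s) (lf t)).support :=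
      Walk.snd_mem_support_of_mem_edges _ he
    exact hD y ⟨s, t, hs, ht, hcs, hct, hym⟩ hyG
  have hgrn : ∀ s t, s < n + 3 → t < n + 3 → χ s → χ t →
      s(x, y) ∉ (tp hTree (lf s) (lf t)).edges := by
    intro s t hs ht hcs hct he
    have hxm : x ∈ (tp hTree (lf s) (lf t)).support :=
      Walk.fst_mem_support_of_mem_edges _ he
    exact hD x hxR ⟨s, t, hs, ht, hcs, hct, hxm⟩
  have hdiff : ∀ s t, s < n + 3 → t < n + 3 → χ s → ¬ χ t →
      ¬ (G.deleteEdges {s(x, y)}).Reachable (lf s) (lf t) := by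
    intro s t hs ht hcs hct hr
    have r1 : (G.deleteEdges {s(x, y)}).Reachable (lf s) (lf s0) :=
      (reachable_delete_iff hTree _ _ _).2 (hgrn s s0 hs hs0 hcs hcs0)
    have r2 : (G.deleteEdges {s(x, y)}).Reachable (lf t) (lf 0) :=
      (reachable_delete_iff hTree _ _ _).2 (hred t 0 ht (by omega) hct ha)
    have r3 : (G.deleteEdges {s(x, y)}).Reachable (lf 0) (lf s0) :=
      (r2.symm.trans hr.symm).trans r1
    rw [reachable_delete_iff hTree] at r3
    exact r3 heP
  refine ⟨s(x, y), ⟨heE, ?_⟩, ?_⟩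
  · intro s t hs ht
    by_cases hcs : χ s <;> by_cases hct : χ t
    · exact iff_of_true ((reachable_delete_iff hTree _ _ _).2
        (hgrn s t hs ht hcs hct)) (iff_of_true hcs hct)
    · exact iff_of_false (hdiff s t hs ht hcs hct) (by tauto)
    · refine iff_of_false (fun hr => hdiff t s ht hs hct hcs hr.symm) (by tauto)
    · exact iff_of_true ((reachable_delete_iff hTree _ _ _).2
        (hred s t hs ht hcs hct)) (iff_of_false hcs hct)
  · rintro e' ⟨he'E, he'prop⟩
    have hnr : ¬ (G.deleteEdges {e'}).Reachable (lf 0) (lf s0) := by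
      intro hr
      have := (he'prop 0 s0 (by omega) hs0).1 hr
      exact ha (this.2 hcs0)
    have he'P : e' ∈ (tp hTree (lf 0) (lf s0)).edges := by
      by_contra h
      exact hnr ((reachable_delete_iff hTree e' _ _).2 h)
    have hred' : ∀ s t, s < n + 3 → t < n + 3 → (χ s ↔ χ t) →
        e' ∉ (tp hTree (lf s) (lf t)).edges := by
      intro s t hs ht hiff
      have hr := (he'prop s t hs ht).2 hiff
      rw [reachable_delete_iff hTree] at hr
      exact hr
    have hPsplit : e' ∈ (tp hTree (lf 0) y).edges ∨ e' ∈ (tp hTree y (lf s0)).edges := by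
      rw [tp_split hTree hyP, Walk.edges_append] at he'P
      exact List.mem_append.mp he'P
    rcases hPsplit with h | h
    · have h1 : e' ∈ (tp hTree y (lf 0)).edges := edges_symm hTree h
      rw [hxe, Walk.edges_cons] at h1
      rcases List.mem_cons.mp h1 with h2 | h2
      · rw [h2]; exact Sym2.eq_swap
      · exfalso
        obtain ⟨r1, r2, hr1, hr2, hcr1, hcr2, hxm⟩ := hxR
        have key : ∀ r, r < n + 3 → ¬ χ r →
            x ∈ (tp hTree (lf 0) (lf r)).support → False := by
          intro r hr hcr hxr
          have : e' ∈ (tp hTree (lf 0) (lf r)).edges :=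
            edges_left_sub hTree hxr (edges_symm hTree h2)
          exact hred' 0 r (by omega) hr (iff_of_false ha hcr) this
        rcases mem_or hTree hxm (lf 0) with hh | hh
        · exact key r1 hr1 hcr1 hh
        · exact key r2 hr2 hcr2 hh
    · exfalso
      obtain ⟨t1, t2, ht1, ht2, hct1, hct2, hym⟩ := hyG
      have key : ∀ t, t < n + 3 → χ t →
          y ∈ (tp hTree (lf s0) (lf t)).support → False := by
        intro t ht hct hyt
        have : e' ∈ (tp hTree (lf s0) (lf t)).edges :=
          edges_left_sub hTree hyt (edges_symm hTree h)
        exact hred' s0 t hs0 ht (iff_of_true hcs0 hct) this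
      rcases mem_or hTree hym (lf s0) with hh | hh
      · exact key t1 ht1 hct1 hh
      · exact key t2 ht2 hct2 hh
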